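/- arXiv:2111.02965 — 9 statements merged into one kernel-verified Lean document; each statement's English description precedes it below -/
import Mathlib

section
/- Let R be a commutative unital ring and n ≥ 1. Then n lies in the stable range of R (i.e., every unimodular row of length n+1 over R is stable) if and only if for every ideal I ⊆ R, the reduction map from unimodular rows of length n over R to unimodular rows of length n over R/I is surjective. -/
def IsUnimodular {R : Type*} [CommRing R] {n : ℕ} (r : Fin n → R) : Prop :=
  Ideal.span (Set.range r) = ⊤

def IsStable {R : Type*} [CommRing R] {n : ℕ} (r : Fin (n + 1) → R) : Prop :=
  ∃ s : Fin n → R,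
    IsUnimodular (fun i : Fin n => r i.castSucc + s i * r (Fin.last n))

def InStableRange (R : Type*) [CommRing R] (n : ℕ) : Prop :=
  ∀ r : Fin (n + 1) → R, IsUnimodular r → IsStable r

noncomputable def bassStableRank (R : Type*) [CommRing R] : ℕ :=
  sInf {n : ℕ | 1 ≤ n ∧ InStableRange R n}

lemma unimodular_iff {R : Type*} [CommRing R] {n : ℕ} (r : Fin n → R) :
    IsUnimodular r ↔ ∃ c : Fin n → R, ∑ i, c i * r i = 1 := by
  rw [IsUnimodular, Ideal.eq_top_iff_one]
  simp_rw [← smul_eq_mul]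
  exact Submodule.mem_span_range_iff_exists_fun R

theorem stmt0 {R : Type*} [CommRing R] (n : ℕ) (hn : 1 ≤ n) :
    InStableRange R n ↔
      ∀ I : Ideal R, ∀ rbar : Fin n → R ⧸ I, IsUnimodular rbar →
        ∃ r : Fin n → R, IsUnimodular r ∧ ∀ i, Ideal.Quotient.mk I (r i) = rbar i := by
  constructor
  · intro h I rbar hrbar
    obtain ⟨c, hc⟩ := (unimodular_iff rbar).mp hrbar
    choose r hr using fun i => Ideal.Quotient.mk_surjective (rbar i)
    choose a ha using fun i => Ideal.Quotient.mk_surjective (c i)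
    set m : R := 1 - ∑ i, a i * r i with hm_def
    have hm : m ∈ I := by
      rw [← Ideal.Quotient.eq_zero_iff_mem]
      simp [hm_def, ha, hr, hc]
    have hrow : IsUnimodular (Fin.snoc r m : Fin (n+1) → R) := by
      rw [unimodular_iff]
      refine ⟨Fin.snoc a 1, ?_⟩
      rw [Fin.sum_univ_castSucc]
      simp only [Fin.snoc_castSucc, Fin.snoc_last, one_mul, hm_def]
      ring
    obtain ⟨s, hs⟩ := h _ hrow
    refine ⟨_, hs, ?_⟩
    intro i
    simp only [Fin.snoc_castSucc, Fin.snoc_last, map_add, map_mul,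
      Ideal.Quotient.eq_zero_iff_mem.mpr hm, mul_zero, add_zero, hr]
  · intro h r hr
    obtain ⟨c, hc⟩ := (unimodular_iff r).mp hr
    set I := Ideal.span {r (Fin.last n)} with hI
    have hz : Ideal.Quotient.mk I (r (Fin.last n)) = 0 :=
      Ideal.Quotient.eq_zero_iff_mem.mpr (Ideal.subset_span rfl)
    have hbar : IsUnimodular (fun i : Fin n => Ideal.Quotient.mk I (r i.castSucc)) := by
      rw [unimodular_iff]
      refine ⟨fun i => Ideal.Quotient.mk I (c i.castSucc), ?_⟩
      have h1 := congrArg (Ideal.Quotient.mk I) hc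
      rw [map_sum, Fin.sum_univ_castSucc] at h1
      simpa [map_mul, hz] using h1
    obtain ⟨r', hr', hlift⟩ := h I _ hbar
    have hdiff : ∀ i, ∃ s, s * r (Fin.last n) = r' i - r i.castSucc := by
      intro i
      rw [← Ideal.mem_span_singleton', ← hI]
      exact Ideal.Quotient.eq.mp (hlift i)
    choose s hs using hdiff
    refine ⟨s, ?_⟩
    have he : (fun i : Fin n => r i.castSucc + s i * r (Fin.last n)) = r' := by
      funext i
      rw [hs i]; ring
    rw [he]; exact hr'
end

section
/- Let R be a commutative unital ring. Then sr(R) ≤ 1 (every unimodular pair (a,b) is stable, i.e., there exists s with a+sb a unit) if and only if for every ideal I ⊆ R the natural group homomorphism R^× → (R/I)^× is surjective. -/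
theorem stmt1 {R : Type*} [CommRing R] :
    (∀ a b : R, Ideal.span {a, b} = ⊤ → ∃ s : R, IsUnit (a + s * b)) ↔
      ∀ I : Ideal R,
        Function.Surjective (Units.map (Ideal.Quotient.mk I).toMonoidHom) := by
  constructor
  · intro h I u
    obtain ⟨a, ha⟩ := Ideal.Quotient.mk_surjective (u : R ⧸ I)
    obtain ⟨b, hb⟩ := Ideal.Quotient.mk_surjective ((u⁻¹ : (R ⧸ I)ˣ) : R ⧸ I)
    have hab : (Ideal.Quotient.mk I) (a * b) = 1 := by
      rw [map_mul, ha, hb, Units.mul_inv]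
    have hi : 1 - a * b ∈ I := by
      rw [← Ideal.Quotient.eq_zero_iff_mem, map_sub, hab, map_one, sub_self]
    have hspan : Ideal.span {a, (1 - a * b)} = ⊤ := by
      rw [Ideal.eq_top_iff_one]
      have h1 : a ∈ Ideal.span ({a, 1 - a * b} : Set R) :=
        Ideal.subset_span (by simp)
      have h2 : (1 - a * b) ∈ Ideal.span ({a, 1 - a * b} : Set R) :=
        Ideal.subset_span (by simp)
      have := Ideal.add_mem _ (Ideal.mul_mem_right b _ h1) h2
      simpa using this
    obtain ⟨s, hs⟩ := h a (1 - a * b) hspan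
    refine ⟨hs.unit, ?_⟩
    ext
    have : (Ideal.Quotient.mk I) (a + s * (1 - a * b)) = (Ideal.Quotient.mk I) a := by
      rw [map_add, map_mul]
      rw [Ideal.Quotient.eq_zero_iff_mem.mpr hi]
      ring
    simp [this, ha]
  · intro h a b hab
    have hmem : (1 : R) ∈ Ideal.span ({a, b} : Set R) := hab ▸ Submodule.mem_top
    rw [Ideal.mem_span_pair] at hmem
    obtain ⟨x, y, hxy⟩ := hmem
    set I := Ideal.span ({b} : Set R)
    have hunit : IsUnit ((Ideal.Quotient.mk I) a) := by
      refine IsUnit.of_mul_eq_one ((Ideal.Quotient.mk I) x) ?_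
      have : (Ideal.Quotient.mk I) (a * x) = (Ideal.Quotient.mk I) 1 := by
        rw [Ideal.Quotient.eq]
        have : a * x - 1 = -(y * b) := by linear_combination hxy
        rw [this]
        exact I.neg_mem (Ideal.mul_mem_left _ _ (Ideal.subset_span rfl))
      simpa [mul_comm] using this
    obtain ⟨w, hw⟩ := h I hunit.unit
    have hw' : (Ideal.Quotient.mk I) (w : R) = (Ideal.Quotient.mk I) a := by
      have := congrArg Units.val hw
      simpa using this
    rw [Ideal.Quotient.eq] at hw'
    obtain ⟨t, ht⟩ := Ideal.mem_span_singleton'.mp hw'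
    refine ⟨t, ?_⟩
    have : a + t * b = (w : R) := by linear_combination ht
    rw [this]
    exact w.isUnit
end

section
/- Let R be a commutative unital ring and I an ideal contained in the Jacobson radical of R. Then sr(R/I) = sr(R). -/
lemma map_mk_eq_top_iff {R : Type*} [CommRing R] (I J : Ideal R) :
    Ideal.map (Ideal.Quotient.mk I) J = ⊤ ↔ J ⊔ I = ⊤ := by
  constructor
  · intro h
    have h2 := congrArg (Ideal.comap (Ideal.Quotient.mk I)) h
    rw [Ideal.comap_map_of_surjective _ Ideal.Quotient.mk_surjective] at h2
    simpa [← RingHom.ker_eq_comap_bot, Ideal.mk_ker] using h2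
  · intro h
    have h2 := congrArg (Ideal.map (Ideal.Quotient.mk I)) h
    rwa [Ideal.map_sup, Ideal.map_quotient_self, sup_bot_eq, Ideal.map_top] at h2

lemma unimod_comp_iff {R : Type*} [CommRing R] (I : Ideal R) {k : ℕ} (r : Fin k → R) :
    IsUnimodular (fun i => Ideal.Quotient.mk I (r i)) ↔
      Ideal.span (Set.range r) ⊔ I = ⊤ := by
  rw [IsUnimodular, show (Set.range fun i => Ideal.Quotient.mk I (r i)) =
      (Ideal.Quotient.mk I) '' Set.range r from Set.range_comp _ r,
    ← Ideal.map_span, map_mk_eq_top_iff]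

lemma eq_top_of_sup_jac {R : Type*} [CommRing R] (I : Ideal R)
    (hI : I ≤ (⊥ : Ideal R).jacobson) {J : Ideal R} (h : J ⊔ I = ⊤) : J = ⊤ := by
  by_contra hJ
  obtain ⟨m, hm, hJm⟩ := Ideal.exists_le_maximal J hJ
  have hIm : I ≤ m := hI.trans (sInf_le ⟨bot_le, hm⟩)
  exact hm.ne_top (top_le_iff.mp (h ▸ sup_le hJm hIm))

theorem stmt3 {R : Type*} [CommRing R] (I : Ideal R)
    (hI : I ≤ (⊥ : Ideal R).jacobson) :
    bassStableRank (R ⧸ I) = bassStableRank R := by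
  have key : ∀ n, InStableRange (R ⧸ I) n ↔ InStableRange R n := by
    intro n
    constructor
    · intro h r hr
      have hr' : IsUnimodular (fun i => Ideal.Quotient.mk I (r i)) := by
        rw [unimod_comp_iff, hr, top_sup_eq]
      obtain ⟨s', hs'⟩ := h _ hr'
      choose s hs using fun i => Ideal.Quotient.mk_surjective (s' i)
      refine ⟨s, eq_top_of_sup_jac I hI ?_⟩
      rw [← unimod_comp_iff I (fun i : Fin n => r i.castSucc + s i * r (Fin.last n))]
      have heq : (fun i : Fin n =>
          Ideal.Quotient.mk I (r i.castSucc + s i * r (Fin.last n)))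
          = fun i : Fin n => (fun j => Ideal.Quotient.mk I (r j)) i.castSucc
              + s' i * (fun j => Ideal.Quotient.mk I (r j)) (Fin.last n) := by
        funext i; simp [hs i]
      rw [heq]
      exact hs'
    · intro h r' hr'
      choose r hrr using fun i => Ideal.Quotient.mk_surjective (r' i)
      have hu : IsUnimodular r := by
        apply eq_top_of_sup_jac I hI
        rw [← unimod_comp_iff]
        have : (fun i => Ideal.Quotient.mk I (r i)) = r' := funext hrr
        rw [this]; exact hr'
      obtain ⟨s, hs⟩ := h r hu
      refine ⟨fun i => Ideal.Quotient.mk I (s i), ?_⟩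
      have h1 : Ideal.span (Set.range fun i : Fin n =>
          r i.castSucc + s i * r (Fin.last n)) ⊔ I = ⊤ := by
        rw [hs, top_sup_eq]
      have h2 := (unimod_comp_iff I _).2 h1
      have heq : (fun i : Fin n => r' i.castSucc
          + Ideal.Quotient.mk I (s i) * r' (Fin.last n))
          = fun i : Fin n =>
            Ideal.Quotient.mk I (r i.castSucc + s i * r (Fin.last n)) := by
        funext i; simp [← hrr]
      rw [heq]
      exact h2
  unfold bassStableRank
  congr 1
  ext m
  simp only [Set.mem_setOf_eq]
  exact and_congr Iff.rfl (key m)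
end

section
/- Let R be a commutative unital ring, and let (a,b,c) be a unimodular row of length 3 over R. Then (a,b,c) is stable (i.e., there exist λ, μ ∈ R such that (a+λc, b+μc) is unimodular) if and only if every matrix in SL₂(R/Rc) whose first row is (ā, b̄) lifts to a matrix in SL₂(R), where ā, b̄ denote the images of a, b in R/Rc. -/
theorem stmt4 {R : Type*} [CommRing R] (a b c : R)
    (h : Ideal.span {a, b, c} = ⊤) :
    (∃ l m : R, Ideal.span {a + l * c, b + m * c} = ⊤) ↔
      ∀ M : Matrix (Fin 2) (Fin 2) (R ⧸ Ideal.span {c}),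
        M.det = 1 →
        M 0 0 = Ideal.Quotient.mk (Ideal.span {c}) a →
        M 0 1 = Ideal.Quotient.mk (Ideal.span {c}) b →
        ∃ N : Matrix (Fin 2) (Fin 2) R, N.det = 1 ∧
          ∀ i j, Ideal.Quotient.mk (Ideal.span {c}) (N i j) = M i j := by
  set I := Ideal.span {c} with hI
  have hc0 : Ideal.Quotient.mk I c = 0 :=
    Ideal.Quotient.eq_zero_iff_mem.mpr (Ideal.subset_span rfl)
  constructor
  · rintro ⟨l, m, hlm⟩ M hdet h00 h01
    obtain ⟨p, q, hpq⟩ := Ideal.mem_span_pair.mp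
      ((Ideal.eq_top_iff_one _).mp hlm)
    obtain ⟨x, hx⟩ := Ideal.Quotient.mk_surjective (M 1 0)
    obtain ⟨y, hy⟩ := Ideal.Quotient.mk_surjective (M 1 1)
    have hd : Ideal.Quotient.mk I (a * y - b * x) = 1 := by
      rw [map_sub, map_mul, map_mul, hx, hy, ← h00, ← h01, ← Matrix.det_fin_two, hdet]
    have : a * y - b * x - 1 ∈ I := by
      rw [← Ideal.Quotient.eq_zero_iff_mem, map_sub, hd, map_one, sub_self]
    obtain ⟨t, ht⟩ := Ideal.mem_span_singleton'.mp this
    set s : R := t + l * y - m * x with hs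
    refine ⟨!![a + l * c, b + m * c; x + c * s * q, y - c * s * p], ?_, ?_⟩
    · rw [Matrix.det_fin_two_of, hs]
      linear_combination -ht - (c * (t + l * y - m * x)) * hpq
    · intro i j
      fin_cases i <;> fin_cases j <;>
        simp [map_add, map_sub, map_mul, hc0, hx, hy, h00, h01]
  · intro H
    have h1 : (1 : R) ∈ Ideal.span ({a, b, c} : Set R) := by
      rw [h]; trivial
    obtain ⟨p, z, hz, hz1⟩ := Ideal.mem_span_insert.mp h1
    obtain ⟨q, w, hw, hw1⟩ := Ideal.mem_span_insert.mp hz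
    obtain ⟨r, hr⟩ := Ideal.mem_span_singleton'.mp hw
    have key : p * a + q * b + r * c = 1 := by
      rw [hz1, hw1, ← hr]; ring
    have hdet : (!![Ideal.Quotient.mk I a, Ideal.Quotient.mk I b;
        Ideal.Quotient.mk I (-q), Ideal.Quotient.mk I p]).det = 1 := by
      rw [Matrix.det_fin_two_of, ← map_mul, ← map_mul, ← map_sub]
      have : a * p - b * (-q) = 1 - r * c := by linear_combination key
      rw [this, map_sub, map_one, map_mul, hc0, mul_zero, sub_zero]
    obtain ⟨N, hN, hNij⟩ := H _ hdet (by simp) (by simp)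
    have h00 : Ideal.Quotient.mk I (N 0 0 - a) = 0 := by
      rw [map_sub, hNij 0 0, sub_eq_zero]; simp
    have h01 : Ideal.Quotient.mk I (N 0 1 - b) = 0 := by
      rw [map_sub, hNij 0 1, sub_eq_zero]; simp
    obtain ⟨l, hl⟩ := Ideal.mem_span_singleton'.mp (Ideal.Quotient.eq_zero_iff_mem.mp h00)
    obtain ⟨m, hm⟩ := Ideal.mem_span_singleton'.mp (Ideal.Quotient.eq_zero_iff_mem.mp h01)
    refine ⟨l, m, (Ideal.eq_top_iff_one _).mpr (Ideal.mem_span_pair.mpr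
      ⟨N 1 1, -(N 1 0), ?_⟩)⟩
    have hdN := N.det_fin_two
    rw [hN] at hdN
    linear_combination -hdN + N 1 1 * hl - N 1 0 * hm
end

section
/- Let R be a commutative unital ring such that for every ideal I ⊆ R the natural map SL₂(R) → SL₂(R/I) is surjective. Then sr(R) ≤ 2, i.e., every unimodular row (a,b,c) of length 3 over R is stable. -/
theorem stmt6 {R : Type*} [CommRing R]
    (hlift : ∀ I : Ideal R, ∀ M : Matrix (Fin 2) (Fin 2) (R ⧸ I), M.det = 1 →
      ∃ N : Matrix (Fin 2) (Fin 2) R, N.det = 1 ∧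
        ∀ i j, Ideal.Quotient.mk I (N i j) = M i j) :
    ∀ a b c : R, Ideal.span {a, b, c} = ⊤ →
      ∃ l m : R, Ideal.span {a + l * c, b + m * c} = ⊤ := by
  intro a b c htop
  set I : Ideal R := Ideal.span {c} with hI
  set π := Ideal.Quotient.mk I with hπ
  have h1 : (1 : R) ∈ Ideal.span ({a, b, c} : Set R) := by
    rw [htop]; trivial
  rw [Ideal.mem_span_insert] at h1
  obtain ⟨x, w, hw, hxw⟩ := h1
  rw [Ideal.mem_span_insert] at hw
  obtain ⟨y, v, hv, hyv⟩ := hw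
  rw [Ideal.mem_span_singleton] at hv
  obtain ⟨z, hz⟩ := hv
  have hc0 : π c = 0 := by
    rw [hπ, Ideal.Quotient.eq_zero_iff_mem]
    exact Ideal.subset_span rfl
  set M : Matrix (Fin 2) (Fin 2) (R ⧸ I) := !![π a, π b; -π y, π x] with hM
  have hdetM : M.det = 1 := by
    rw [hM, Matrix.det_fin_two_of]
    have h1' : (1 : R ⧸ I) = π a * π x + π b * π y := by
      have : π 1 = π (x * a + (y * b + c * z)) := by rw [hxw, hyv, hz]
      simpa [map_add, map_mul, hc0, mul_comm] using this
    rw [h1']; ring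
  obtain ⟨N, hdetN, hNM⟩ := hlift I M hdetM
  have hN00 : π (N 0 0) = π a := by simpa [hM] using hNM 0 0
  have hN01 : π (N 0 1) = π b := by simpa [hM] using hNM 0 1
  have hla : N 0 0 - a ∈ I := by
    rw [← Ideal.Quotient.eq_zero_iff_mem, map_sub]
    rw [hπ] at hN00; rw [hN00, sub_self]
  have hlb : N 0 1 - b ∈ I := by
    rw [← Ideal.Quotient.eq_zero_iff_mem, map_sub]
    rw [hπ] at hN01; rw [hN01, sub_self]
  rw [hI, Ideal.mem_span_singleton] at hla hlb
  obtain ⟨l, hl⟩ := hla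
  obtain ⟨m, hm⟩ := hlb
  refine ⟨l, m, ?_⟩
  have ha' : a + l * c = N 0 0 := by linear_combination -hl
  have hb' : b + m * c = N 0 1 := by linear_combination -hm
  rw [ha', hb', Ideal.eq_top_iff_one, Ideal.mem_span_pair]
  rw [Matrix.det_fin_two] at hdetN
  exact ⟨N 1 1, -(N 1 0), by linear_combination hdetN⟩
end

section
/- Let R be a commutative unital ring of stable rank 1 (i.e., for every unimodular pair (a,b) there is s ∈ R with a+sb a unit). Then SL₂(R) = E₂(R), i.e., every 2×2 matrix over R of determinant 1 is a product of elementary matrices. -/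
def IsElementary {R : Type*} [CommRing R] {n : ℕ} (M : Matrix (Fin n) (Fin n) R) : Prop :=
  ∃ i j : Fin n, ∃ r : R, i ≠ j ∧ M = 1 + Matrix.single i j r

private lemma memL {R : Type*} [CommRing R] (r : R) :
    (!![1,0;r,1] : Matrix (Fin 2) (Fin 2) R) ∈
      Submonoid.closure {E : Matrix (Fin 2) (Fin 2) R | IsElementary E} := by
  apply Submonoid.subset_closure
  refine ⟨1, 0, r, by decide, ?_⟩
  ext i j
  fin_cases i <;> fin_cases j <;>
    simp [Matrix.single, Matrix.one_apply]

private lemma memU {R : Type*} [CommRing R] (r : R) :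
    (!![1,r;0,1] : Matrix (Fin 2) (Fin 2) R) ∈
      Submonoid.closure {E : Matrix (Fin 2) (Fin 2) R | IsElementary E} := by
  apply Submonoid.subset_closure
  refine ⟨0, 1, r, by decide, ?_⟩
  ext i j
  fin_cases i <;> fin_cases j <;>
    simp [Matrix.single, Matrix.one_apply]

theorem stmt8 {R : Type*} [CommRing R]
    (hsr1 : ∀ a b : R, Ideal.span {a, b} = ⊤ → ∃ s : R, IsUnit (a + s * b)) :
    ∀ M : Matrix (Fin 2) (Fin 2) R, M.det = 1 →
      M ∈ Submonoid.closure {E : Matrix (Fin 2) (Fin 2) R | IsElementary E} := by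
  intro M hdet
  set a := M 0 0 with ha
  set b := M 0 1 with hb
  set c := M 1 0 with hc
  set d := M 1 1 with hd
  have hdet' : a * d - b * c = 1 := by
    rw [Matrix.det_fin_two] at hdet
    exact hdet
  have hspan : Ideal.span ({a, b} : Set R) = ⊤ := by
    rw [Ideal.eq_top_iff_one, Ideal.mem_span_pair]
    exact ⟨d, -c, by linear_combination hdet'⟩
  obtain ⟨s, hu⟩ := hsr1 a b hspan
  obtain ⟨v, huv⟩ := hu.exists_right_inv
  have key : M =
      !![1,0;(c+d*s)*v,1] * !![1,a+s*b;0,1] * !![1,0;-v,1] * !![1,a+s*b;0,1] *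
      !![1,-1;0,1] * !![1,0;1,1] * !![1,-1;0,1] * !![1,v*b;0,1] * !![1,0;-s,1] := by
    have hM : M = !![a, b; c, d] := by
      rw [ha, hb, hc, hd]
      exact Matrix.etaExpand_eq M |>.symm
    rw [hM]
    simp only [Matrix.mul_fin_two]
    ext i j
    fin_cases i <;> fin_cases j <;> simp
    · linear_combination (s + 2*b*s - b^2*s^2*v + a - a*b*s*v) * huv
    · linear_combination (-1 - b + b^2*s*v + a*b*v) * huv
    · linear_combination (1 + d*s^2*v - c + c*s*v - b*s*v + 2*b*d*s^2*v + 2*b*c*s*v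
        - b^2*d*s^3*v^2 - b^2*c*s^2*v^2 + a*d*s*v + a*c*v - a*b*d*s^2*v^2 - a*b*c*s*v^2) * huv
        + (-(s*v)) * hdet'
    · linear_combination (-d - d*s*v - c*v + b*v - b*d*s*v - b*c*v + b^2*d*s^2*v^2
        + b^2*c*s*v^2 + a*b*d*s*v^2 + a*b*c*v^2) * huv + v * hdet'
  rw [key]
  exact Submonoid.mul_mem _ (Submonoid.mul_mem _ (Submonoid.mul_mem _ (Submonoid.mul_mem _
    (Submonoid.mul_mem _ (Submonoid.mul_mem _ (Submonoid.mul_mem _ (Submonoid.mul_mem _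
      (memL _) (memU _)) (memL _)) (memU _)) (memU _)) (memL _)) (memU _)) (memU _)) (memL _)
end

section
/- Let R be a commutative unital ring such that every proper quotient of R/Jac(R) has stable rank 1. Then sr(R) ≤ 2. -/
open Ideal

-- span pair = top iff combination
lemma pair_top {R : Type*} [CommRing R] (x y : R) :
    Ideal.span {x, y} = ⊤ ↔ ∃ u v : R, u * x + v * y = 1 := by
  rw [Ideal.eq_top_iff_one, Ideal.mem_span_pair]

lemma triple_one {R : Type*} [CommRing R] {x y z : R}
    (h : Ideal.span {x, y, z} = ⊤) : ∃ u v w : R, u * x + v * y + w * z = 1 := by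
  rw [Ideal.eq_top_iff_one, Ideal.span_insert, Submodule.mem_sup] at h
  obtain ⟨p, hp, q, hq, hpq⟩ := h
  rw [Ideal.mem_span_singleton'] at hp
  obtain ⟨u, rfl⟩ := hp
  rw [Ideal.mem_span_pair] at hq
  obtain ⟨v, w, rfl⟩ := hq
  exact ⟨u, v, w, by linear_combination hpq⟩

lemma jac_lift {R : Type*} [CommRing R] (x y : R)
    (h : Ideal.span {Ideal.Quotient.mk ((⊥ : Ideal R).jacobson) x,
        Ideal.Quotient.mk ((⊥ : Ideal R).jacobson) y} = ⊤) :
    Ideal.span {x, y} = ⊤ := by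
  rw [pair_top] at h ⊢
  obtain ⟨u, v, huv⟩ := h
  obtain ⟨u', rfl⟩ := Ideal.Quotient.mk_surjective u
  obtain ⟨v', rfl⟩ := Ideal.Quotient.mk_surjective v
  have hmem : u' * x + v' * y - 1 ∈ (⊥ : Ideal R).jacobson := by
    rw [← Ideal.Quotient.eq_zero_iff_mem]
    simp only [map_sub, map_add, _root_.map_mul, map_one]
    linear_combination huv
  rw [Ideal.mem_jacobson_bot] at hmem
  have := hmem 1
  rw [mul_one, sub_add_cancel] at this
  obtain ⟨w, hw⟩ := this
  exact ⟨w.inv * u', w.inv * v', by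
    have : (w.inv : R) * (u' * x + v' * y) = 1 := by
      rw [← hw]; exact w.inv_mul
    linear_combination this⟩

theorem stmt9 {R : Type*} [CommRing R]
    (h : ∀ I : Ideal (R ⧸ (⊥ : Ideal R).jacobson), I ≠ ⊥ →
      ∀ a b : (R ⧸ (⊥ : Ideal R).jacobson) ⧸ I, Ideal.span {a, b} = ⊤ →
        ∃ s, IsUnit (a + s * b)) :
    ∀ a b c : R, Ideal.span {a, b, c} = ⊤ →
      ∃ l m : R, Ideal.span {a + l * c, b + m * c} = ⊤ := by
  intro a b c habc
  obtain ⟨u, v, w, huvw⟩ := triple_one habc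
  set J := (⊥ : Ideal R).jacobson
  set π := Ideal.Quotient.mk J
  by_cases hb : π b = 0
  · -- l = 0, m = 1
    have e1 : a + 0 * c = a := by ring
    have e2 : b + 1 * c = b + c := by ring
    refine ⟨0, 1, ?_⟩
    rw [e1, e2]
    apply jac_lift
    rw [pair_top]
    refine ⟨π u, π w, ?_⟩
    have h1 : π (u * a + v * b + w * c) = 1 := by rw [huvw]; exact map_one π
    simp only [map_add, _root_.map_mul] at h1 ⊢
    linear_combination h1 + (π w - π v) * hb
  · set I : Ideal (R ⧸ J) := Ideal.span {π b}
    have hI : I ≠ ⊥ := by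
      simpa [I, Ideal.span_singleton_eq_bot] using hb
    set ρ := Ideal.Quotient.mk I
    have hpair : Ideal.span {ρ (π a), ρ (π c)} = ⊤ := by
      rw [pair_top]
      refine ⟨ρ (π u), ρ (π w), ?_⟩
      have h1 : ρ (π (u * a + v * b + w * c)) = 1 := by rw [huvw]; simp
      have hb0 : ρ (π b) = 0 := by
        rw [Ideal.Quotient.eq_zero_iff_mem]
        exact Ideal.subset_span rfl
      simp only [map_add, _root_.map_mul] at h1
      rw [hb0] at h1
      linear_combination h1
    obtain ⟨s, hs⟩ := h I hI (ρ (π a)) (ρ (π c)) hpair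
    obtain ⟨s', rfl⟩ := Ideal.Quotient.mk_surjective s
    obtain ⟨l, rfl⟩ := Ideal.Quotient.mk_surjective s'
    refine ⟨l, 0, ?_⟩
    have e1 : b + 0 * c = b := by ring
    rw [e1]
    apply jac_lift
    rw [pair_top]
    obtain ⟨t, ht⟩ := hs.exists_right_inv
    obtain ⟨t1, rfl⟩ := Ideal.Quotient.mk_surjective t
    obtain ⟨t', rfl⟩ := Ideal.Quotient.mk_surjective t1
    have hmem : π (a + l * c) * t' - 1 ∈ I := by
      rw [← Ideal.Quotient.eq_zero_iff_mem]
      simp only [map_sub, _root_.map_mul, map_one, map_add]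
      linear_combination ht
    rw [Ideal.mem_span_singleton'] at hmem
    obtain ⟨d, hd⟩ := hmem
    obtain ⟨d', rfl⟩ := Ideal.Quotient.mk_surjective d
    refine ⟨π t', -π d', ?_⟩
    simp only [map_add, _root_.map_mul] at hd ⊢
    linear_combination -hd
end

section
/- The Bass stable rank of ℤ[x] is at most 3: every unimodular row of length 4 over ℤ[x] is stable. -/
open Polynomial

lemma exists_prime_elt {R : Type*} [CommRing R] [IsDomain R] [UniqueFactorizationMonoid R]
    {p : Ideal R} (hp : p.IsPrime) {f : R} (hf : f ∈ p) (hf0 : f ≠ 0) :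
    ∃ π : R, Prime π ∧ π ∈ p := by
  obtain ⟨s, hs, u, hu⟩ := UniqueFactorizationMonoid.exists_prime_factors f hf0
  have hsp : s.prod ∈ p := by
    have h2 : f * ↑u⁻¹ ∈ p := p.mul_mem_right _ hf
    rwa [← hu, mul_assoc, Units.mul_inv, mul_one] at h2
  obtain ⟨π, hπs, hπp⟩ := (hp.multiset_prod_mem_iff_exists_mem s).mp hsp
  exact ⟨π, hs π hπs, hπp⟩

lemma no_chain_over_zero {p p' : Ideal (Polynomial ℤ)} (hp : p.IsPrime) (hp' : p'.IsPrime)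
    (hlt : p < p') (h0 : p ≠ ⊥) (hconst : ∀ n : ℤ, C n ∈ p' → n = 0) : False := by
  obtain ⟨f, hf, hf0⟩ := Submodule.exists_mem_ne_zero_of_ne_bot h0
  obtain ⟨π, hπ, hπp⟩ := exists_prime_elt hp hf hf0
  have hinj : Function.Injective (Int.castRingHom ℚ) := Int.cast_injective
  have hmapinj : Function.Injective (Polynomial.map (Int.castRingHom ℚ)) :=
    Polynomial.map_injective _ hinj
  have hπp' : π ∈ p' := hlt.le hπp
  -- π is primitive
  have hprim : π.IsPrimitive := by
    intro r hr
    obtain ⟨h, hh⟩ := hr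
    by_contra hru
    rcases hπ.irreducible.isUnit_or_isUnit hh with h1 | h1
    · exact hru (isUnit_C.mp h1)
    · obtain ⟨u, hu1, hu2⟩ := Polynomial.isUnit_iff.mp h1
      have : π = C (r * u) := by rw [map_mul, hu2, ← hh]
      have h2 : r * u = 0 := hconst _ (this ▸ hπp')
      exact hπ.ne_zero (by rw [this, h2, map_zero])
  have hπQirr : Irreducible (π.map (Int.castRingHom ℚ)) :=
    (Polynomial.IsPrimitive.Int.irreducible_iff_irreducible_map_cast hprim).mp hπ.irreducible
  obtain ⟨g, hgp', hgp⟩ := SetLike.exists_of_lt hlt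
  have hg0 : g ≠ 0 := fun h => hgp (h ▸ p.zero_mem)
  by_cases hdvd : π.map (Int.castRingHom ℚ) ∣ g.map (Int.castRingHom ℚ)
  · obtain ⟨h, hh⟩ := hdvd
    obtain ⟨b, hb⟩ := IsLocalization.integerNormalization_map_to_map (nonZeroDivisors ℤ) h
    set H := IsLocalization.integerNormalization (nonZeroDivisors ℤ) h with hH
    have hb' : H.map (Int.castRingHom ℚ) = C ((b : ℤ) : ℚ) * h := by
      rw [← algebraMap_int_eq, hb, zsmul_eq_mul, Polynomial.C_eq_intCast]
    have key : C (b : ℤ) * g = π * H := by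
      apply hmapinj
      rw [Polynomial.map_mul, Polynomial.map_mul, hb', map_C, hh]
      simp only [eq_intCast]
      ring
    have hmem : C (b : ℤ) * g ∈ p := key ▸ p.mul_mem_right _ hπp
    rcases hp.mem_or_mem hmem with h1 | h1
    · exact nonZeroDivisors.coe_ne_zero b (hconst _ (hlt.le h1))
    · exact hgp h1
  · have hcop : IsCoprime (π.map (Int.castRingHom ℚ)) (g.map (Int.castRingHom ℚ)) :=
      (hπQirr.coprime_iff_not_dvd).mpr hdvd
    obtain ⟨a, c, hac⟩ := hcop
    obtain ⟨α, hα⟩ := IsLocalization.integerNormalization_map_to_map (nonZeroDivisors ℤ) a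
    obtain ⟨β, hβ⟩ := IsLocalization.integerNormalization_map_to_map (nonZeroDivisors ℤ) c
    set A := IsLocalization.integerNormalization (nonZeroDivisors ℤ) a with hA
    set B := IsLocalization.integerNormalization (nonZeroDivisors ℤ) c with hB
    have hα' : A.map (Int.castRingHom ℚ) = C ((α : ℤ) : ℚ) * a := by
      rw [← algebraMap_int_eq, hα, zsmul_eq_mul, Polynomial.C_eq_intCast]
    have hβ' : B.map (Int.castRingHom ℚ) = C ((β : ℤ) : ℚ) * c := by
      rw [← algebraMap_int_eq, hβ, zsmul_eq_mul, Polynomial.C_eq_intCast]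
    have key : C (β : ℤ) * A * π + C (α : ℤ) * B * g = C ((α : ℤ) * (β : ℤ)) := by
      apply hmapinj
      rw [Polynomial.map_add, Polynomial.map_mul, Polynomial.map_mul, Polynomial.map_mul,
        Polynomial.map_mul, hα', hβ', map_C, map_C, map_C]
      simp only [eq_intCast, Int.cast_mul]
      calc C ((β:ℤ):ℚ) * (C ((α:ℤ):ℚ) * a) * π.map (Int.castRingHom ℚ)
            + C ((α:ℤ):ℚ) * (C ((β:ℤ):ℚ) * c) * g.map (Int.castRingHom ℚ)
          = C ((α:ℤ):ℚ) * C ((β:ℤ):ℚ) *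
            (a * π.map (Int.castRingHom ℚ) + c * g.map (Int.castRingHom ℚ)) := by ring
        _ = C (((α:ℤ):ℚ) * ((β:ℤ):ℚ)) := by rw [hac, mul_one, ← C_mul]
    have hmem : C ((α : ℤ) * (β : ℤ)) ∈ p' := by
      rw [← key]
      exact Ideal.add_mem _ (p'.mul_mem_left _ hπp') (p'.mul_mem_left _ hgp')
    have := hconst _ hmem
    rcases mul_eq_zero.mp this with h1 | h1
    · exact nonZeroDivisors.coe_ne_zero α h1
    · exact nonZeroDivisors.coe_ne_zero β h1

lemma pid_no_chain {R : Type*} [CommRing R] [IsDomain R] [IsPrincipalIdealRing R]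
    {P Q : Ideal R} (hP : P.IsPrime) (hQ : Q.IsPrime) (hPQ : P < Q) (hP0 : P ≠ ⊥) : False := by
  haveI : P.IsPrime := hP
  exact hPQ.ne ((IsPrime.to_maximal_ideal hP0).eq_of_le hQ.ne_top hPQ.le)

lemma fiber_lemma {q : ℕ} (hq : q.Prime) {P P' : Ideal (Polynomial ℤ)} (hP : P.IsPrime)
    (hP' : P'.IsPrime) (hlt : P < P') (hqP : (C (q : ℤ)) ∈ P) :
    P = Ideal.span {C (q : ℤ)} := by
  haveI : Fact q.Prime := ⟨hq⟩
  set φ : Polynomial ℤ →+* Polynomial (ZMod q) :=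
    Polynomial.mapRingHom (Int.castRingHom (ZMod q)) with hφ
  have hsurj : Function.Surjective φ :=
    Polynomial.map_surjective _ ZMod.intCast_surjective
  have hker : RingHom.ker φ = Ideal.span {C (q : ℤ)} := by
    rw [hφ, Polynomial.ker_mapRingHom, ZMod.ker_intCastRingHom, Ideal.map_span,
      Set.image_singleton]
  have hkerP : RingHom.ker φ ≤ P := by
    rw [hker, Ideal.span_le, Set.singleton_subset_iff]; exact hqP
  have hkerP' : RingHom.ker φ ≤ P' := hkerP.trans hlt.le
  have hQ : (P.map φ).IsPrime := Ideal.map_isPrime_of_surjective hsurj hkerP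
  have hQ' : (P'.map φ).IsPrime := Ideal.map_isPrime_of_surjective hsurj hkerP'
  have hQQ' : P.map φ < P'.map φ := by
    refine lt_of_le_of_ne (Ideal.map_mono hlt.le) fun hEq => hlt.ne ?_
    have h1 := Ideal.comap_map_of_surjective φ hsurj P
    have h2 := Ideal.comap_map_of_surjective φ hsurj P'
    rw [← RingHom.ker_eq_comap_bot] at h1 h2
    rw [hEq, h2, sup_eq_left.mpr hkerP'] at h1
    rw [sup_eq_left.mpr hkerP] at h1
    exact h1.symm
  have hbot : P.map φ = ⊥ := by
    by_contra hne
    exact pid_no_chain hQ hQ' hQQ' hne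
  refine le_antisymm (fun x hx => ?_) (by rwa [Ideal.span_le, Set.singleton_subset_iff])
  rw [← hker]
  have : φ x ∈ P.map φ := Ideal.mem_map_of_mem φ hx
  rw [hbot] at this
  exact this

lemma exists_prime_const {p : Ideal (Polynomial ℤ)} (hp : p.IsPrime) :
    ∀ (n : ℤ), n ≠ 0 → C n ∈ p → ∃ q : ℕ, q.Prime ∧ C (q : ℤ) ∈ p := by
  have key : ∀ (N : ℕ) (n : ℤ), n.natAbs ≤ N → n ≠ 0 → C n ∈ p →
      ∃ q : ℕ, q.Prime ∧ C (q : ℤ) ∈ p := by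
    intro N
    induction N with
    | zero => intro n hle hn0 _; exact absurd (Int.natAbs_eq_zero.mp (Nat.le_zero.mp hle)) hn0
    | succ N ih =>
      intro n hle hn0 hmem
      by_cases h1 : n.natAbs = 1
      · have hu : IsUnit (C n) := (Int.isUnit_iff_natAbs_eq.mpr h1).map C
        exact absurd (Ideal.eq_top_of_isUnit_mem _ hmem hu) hp.ne_top
      · obtain ⟨k, hk, m, rfl⟩ := Int.exists_prime_and_dvd h1
        rw [map_mul] at hmem
        rcases hp.mem_or_mem hmem with hmk | hmm
        · refine ⟨k.natAbs, Int.prime_iff_natAbs_prime.mp hk, ?_⟩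
          rcases Int.natAbs_eq k with he | he
          · rwa [← he]
          · have : C ((k.natAbs : ℤ)) = -C k := by rw [← map_neg]; congr 1; omega
            rw [this]; exact p.neg_mem hmk
        · have hm0 : m ≠ 0 := by rintro rfl; simp at hn0
          have hklt : 2 ≤ k.natAbs := (Int.prime_iff_natAbs_prime.mp hk).two_le
          have : m.natAbs ≤ N := by
            have h := Int.natAbs_mul k m
            have hm1 : 1 ≤ m.natAbs := Nat.one_le_iff_ne_zero.mpr (Int.natAbs_ne_zero.mpr hm0)
            nlinarith [hle, h]
          exact ih m this hm0 hmm
  intro n hn0 hmem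
  exact key n.natAbs n le_rfl hn0 hmem

lemma descent {q : ℕ} (hq : q.Prime) {p : Ideal (Polynomial ℤ)} (hp : p.IsPrime) (h0 : p ≠ ⊥)
    (hlt : p < Ideal.span {C (q : ℤ)}) : False := by
  have hCq : C (q : ℤ) ∉ p := fun h =>
    hlt.ne (le_antisymm hlt.le (by rwa [Ideal.span_le, Set.singleton_subset_iff]))
  have key : ∀ (N : ℕ) (f : Polynomial ℤ), f ∈ p → f ≠ 0 → f.leadingCoeff.natAbs ≤ N → False := by
    intro N
    induction N with
    | zero =>
      intro f _ hf0 hle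
      exact hf0 (leadingCoeff_eq_zero.mp (Int.natAbs_eq_zero.mp (Nat.le_zero.mp hle)))
    | succ N ih =>
      intro f hf hf0 hle
      obtain ⟨g, rfl⟩ := Ideal.mem_span_singleton.mp (hlt.le hf)
      have hg : g ∈ p := (hp.mem_or_mem hf).resolve_left hCq
      have hg0 : g ≠ 0 := by rintro rfl; simp at hf0
      have hlc : (C (q : ℤ) * g).leadingCoeff.natAbs = q * g.leadingCoeff.natAbs := by
        rw [leadingCoeff_mul, leadingCoeff_C, Int.natAbs_mul]
        simp
      have hglc : 1 ≤ g.leadingCoeff.natAbs :=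
        Nat.one_le_iff_ne_zero.mpr (Int.natAbs_ne_zero.mpr (leadingCoeff_ne_zero.mpr hg0))
      have h2 : 2 ≤ q := hq.two_le
      have : g.leadingCoeff.natAbs ≤ N := by rw [hlc] at hle; nlinarith
      exact ih g hg hg0 this
  obtain ⟨f, hf, hf0⟩ := Submodule.exists_mem_ne_zero_of_ne_bot h0
  exact key f.leadingCoeff.natAbs f hf hf0 le_rfl

lemma avoid {R : Type*} [CommRing R] (S : Finset (Ideal R)) (hprime : ∀ p ∈ S, p.IsPrime)
    (hinc : ∀ p ∈ S, ∀ p' ∈ S, p ≤ p' → p = p') (a b : R) (hb : ∀ p ∈ S, b ∉ p) :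
    ∃ t, ∀ p ∈ S, a + t * b ∉ p := by
  classical
  induction S using Finset.induction_on with
  | empty => exact ⟨0, by simp⟩
  | @insert p S hpS ih =>
    obtain ⟨t, ht⟩ := ih (fun q hq => hprime q (Finset.mem_insert_of_mem hq))
      (fun q hq q' hq' => hinc q (Finset.mem_insert_of_mem hq) q' (Finset.mem_insert_of_mem hq'))
      (fun q hq => hb q (Finset.mem_insert_of_mem hq))
    have hpP : p.IsPrime := hprime p (Finset.mem_insert_self p S)
    have hbp : b ∉ p := hb p (Finset.mem_insert_self p S)
    by_cases hmem : a + t * b ∈ p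
    · -- build δ ∈ every q ∈ S, δ ∉ p
      have hx : ∀ q ∈ S, ∃ x, x ∈ q ∧ x ∉ p := by
        intro q hq
        by_contra hcon
        push_neg at hcon
        have hle : q ≤ p := fun x hxq => hcon x hxq
        have := hinc q (Finset.mem_insert_of_mem hq) p (Finset.mem_insert_self p S) hle
        exact hpS (this ▸ hq)
      choose x hx1 hx2 using hx
      set δ := ∏ q ∈ S.attach, x q.1 q.2 with hδ
      have hδp : δ ∉ p := by
        intro hcon
        haveI := hpP
        obtain ⟨q, _, hq2⟩ := Ideal.IsPrime.prod_mem_iff.mp hcon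
        exact hx2 q.1 q.2 hq2
      have hδq : ∀ q ∈ S, δ ∈ q := by
        intro q hq
        rw [hδ, ← Finset.prod_erase_mul _ _ (Finset.mem_attach S ⟨q, hq⟩)]
        exact q.mul_mem_left _ (hx1 q hq)
      refine ⟨t + δ, ?_⟩
      intro q hq
      rcases Finset.mem_insert.mp hq with rfl | hq'
      · intro hcon
        have h1 : a + (t + δ) * b - (a + t * b) ∈ q := q.sub_mem hcon hmem
        have h2 : δ * b ∈ q := by convert h1 using 1; ring
        rcases hpP.mem_or_mem h2 with h3 | h3
        exacts [hδp h3, hbp h3]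
      · intro hcon
        have h1 : a + (t + δ) * b - δ * b ∈ q := q.sub_mem hcon (q.mul_mem_right _ (hδq q hq'))
        have h2 : a + t * b ∈ q := by convert h1 using 1; ring
        exact ht q hq' h2
    · refine ⟨t, ?_⟩
      intro q hq
      rcases Finset.mem_insert.mp hq with rfl | hq'
      exacts [hmem, ht q hq']

lemma minimalPrimes_finite {R : Type*} [CommRing R] [IsNoetherianRing R] (I : Ideal R) :
    I.minimalPrimes.Finite := by
  rw [Ideal.minimalPrimes_eq_comap]
  exact (minimalPrimes.finite_of_isNoetherianRing (R ⧸ I)).image _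

lemma exists_avoid (I : Ideal (Polynomial ℤ)) (a b : Polynomial ℤ) :
    ∃ t, ∀ p ∈ I.minimalPrimes, b ∉ p → a + t * b ∉ p := by
  classical
  have hfin : {p ∈ I.minimalPrimes | b ∉ p}.Finite :=
    (minimalPrimes_finite I).subset (Set.sep_subset _ _)
  obtain ⟨t, ht⟩ := avoid hfin.toFinset
    (fun p hp => ((hfin.mem_toFinset.mp hp).1.1).1)
    (fun p hp p' hp' hle => le_antisymm hle
      ((hfin.mem_toFinset.mp hp').1.2 (hfin.mem_toFinset.mp hp).1.1 hle))
    a b (fun p hp => (hfin.mem_toFinset.mp hp).2)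
  exact ⟨t, fun p hp hbp => ht p (hfin.mem_toFinset.mpr ⟨hp, hbp⟩)⟩


lemma dim_two {p1 p2 p3 : Ideal (Polynomial ℤ)} (h1 : p1.IsPrime) (h2 : p2.IsPrime)
    (h3 : p3.IsPrime) (h12 : p1 < p2) (h23 : p2 < p3) (h10 : p1 ≠ ⊥) : False := by
  by_cases hc : ∀ n : ℤ, C n ∈ p2 → n = 0
  · exact no_chain_over_zero h1 h2 h12 h10 hc
  · push_neg at hc
    obtain ⟨n, hnmem, hn0⟩ := hc
    obtain ⟨q, hq, hqm⟩ := exists_prime_const h2 n hn0 hnmem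
    have hp2 := fiber_lemma hq h2 h3 h23 hqm
    exact descent hq h1 h10 (hp2 ▸ h12)

theorem stmt10 (r : Fin 4 → Polynomial ℤ)
    (h : Ideal.span (Set.range r) = ⊤) :
    ∃ s : Fin 3 → Polynomial ℤ,
      Ideal.span (Set.range fun i : Fin 3 => r i.castSucc + s i * r (Fin.last 3)) = ⊤ := by
  set b := r (Fin.last 3) with hbdef
  have key : ∃ t1 t2 t3 : Polynomial ℤ,
      Ideal.span {r 0 + t1 * b, r 1 + t2 * b, r 2 + t3 * b} = ⊤ := by
    by_cases hb0 : b = 0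
    · refine ⟨0, 0, 0, ?_⟩
      rw [← top_le_iff, ← h, Ideal.span_le]
      rintro x ⟨i, rfl⟩
      fin_cases i
      · exact Ideal.subset_span (by simp)
      · exact Ideal.subset_span (by simp)
      · exact Ideal.subset_span (by simp)
      · show r (Fin.last 3) ∈ _
        rw [← hbdef, hb0]; exact Ideal.zero_mem _
    · set t1 : Polynomial ℤ := if r 0 = 0 then 1 else 0 with ht1
      set r1 := r 0 + t1 * b with hr1def
      have hr1 : r1 ≠ 0 := by
        rw [hr1def, ht1]
        by_cases h0 : r 0 = 0 <;> simp [h0, hb0]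
      obtain ⟨t2, ht2⟩ := exists_avoid (Ideal.span {r1}) (r 1) b
      set r2 := r 1 + t2 * b with hr2def
      obtain ⟨t3, ht3⟩ := exists_avoid (Ideal.span {r1, r2}) (r 2) b
      set r3 := r 2 + t3 * b with hr3def
      refine ⟨t1, t2, t3, ?_⟩
      by_contra hne
      obtain ⟨M, hMmax, hJM⟩ := Ideal.exists_le_maximal _ hne
      have hr1M : r1 ∈ M := hJM (Ideal.subset_span (by simp [hr1def]))
      have hr2M : r2 ∈ M := hJM (Ideal.subset_span (by simp [hr2def]))
      have hr3M : r3 ∈ M := hJM (Ideal.subset_span (by simp [hr3def]))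
      by_cases hbM : b ∈ M
      · have hrM : ∀ i, r i ∈ M := by
          intro i
          fin_cases i
          · show r 0 ∈ M
            have : r 0 = r1 - t1 * b := by rw [hr1def]; ring
            rw [this]; exact M.sub_mem hr1M (M.mul_mem_left _ hbM)
          · show r 1 ∈ M
            have : r 1 = r2 - t2 * b := by rw [hr2def]; ring
            rw [this]; exact M.sub_mem hr2M (M.mul_mem_left _ hbM)
          · show r 2 ∈ M
            have : r 2 = r3 - t3 * b := by rw [hr3def]; ring
            rw [this]; exact M.sub_mem hr3M (M.mul_mem_left _ hbM)
          · show r (Fin.last 3) ∈ M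
            exact hbM
        have : Ideal.span (Set.range r) ≤ M := by
          rw [Ideal.span_le]; rintro x ⟨i, rfl⟩; exact hrM i
        rw [h] at this
        exact hMmax.ne_top (top_le_iff.mp this)
      · have hMp : M.IsPrime := hMmax.isPrime
        obtain ⟨p2, hp2min, hp2M⟩ := Ideal.exists_minimalPrimes_le
          (I := Ideal.span {r1, r2}) (J := M)
          (Ideal.span_le.mpr (by rintro x (rfl | rfl) <;> [exact hr1M; exact hr2M]))
        have hp2prime : p2.IsPrime := hp2min.1.1
        have hbp2 : b ∉ p2 := fun hc => hbM (hp2M hc)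
        have hr3p2 : r3 ∉ p2 := ht3 p2 hp2min hbp2
        have hp2lt : p2 < M := lt_of_le_of_ne hp2M (fun hEq => hr3p2 (hEq ▸ hr3M))
        have hI1p2 : Ideal.span {r1} ≤ p2 :=
          le_trans (Ideal.span_mono (by simp)) hp2min.1.2
        obtain ⟨p1, hp1min, hp1p2⟩ := Ideal.exists_minimalPrimes_le
          (I := Ideal.span {r1}) (J := p2) hI1p2
        have hp1prime : p1.IsPrime := hp1min.1.1
        have hbp1 : b ∉ p1 := fun hc => hbp2 (hp1p2 hc)
        have hr2p1 : r2 ∉ p1 := ht2 p1 hp1min hbp1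
        have hr2p2 : r2 ∈ p2 := hp2min.1.2 (Ideal.subset_span (by simp))
        have hp1lt : p1 < p2 := lt_of_le_of_ne hp1p2 (fun hEq => hr2p1 (hEq ▸ hr2p2))
        have hp1ne : p1 ≠ ⊥ := by
          intro hEq
          exact hr1 (Submodule.mem_bot _ |>.mp
            (hEq ▸ hp1min.1.2 (Ideal.subset_span (by simp))))
        exact dim_two hp1prime hp2prime hMp hp1lt hp2lt hp1ne
  obtain ⟨t1, t2, t3, hspan⟩ := key
  refine ⟨![t1, t2, t3], ?_⟩
  rw [← top_le_iff, ← hspan, Ideal.span_le]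
  rintro x (rfl | rfl | rfl)
  · exact Ideal.subset_span ⟨0, by simp⟩
  · exact Ideal.subset_span ⟨1, by simp [show ((1 : Fin 3).castSucc : Fin 4) = 1 from rfl]⟩
  · exact Ideal.subset_span ⟨2, by simp [show ((2 : Fin 3).castSucc : Fin 4) = 2 from rfl]⟩
end

section
/- Every commutative Artinian ring has stable rank 1: if R is a commutative Artinian ring and (a,b) is a unimodular pair in R, then there exists s ∈ R such that a + sb is a unit. -/
theorem stmt18 {R : Type*} [CommRing R] [IsArtinianRing R]
    (a b : R) (h : Ideal.span {a, b} = ⊤) :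
    ∃ s : R, IsUnit (a + s * b) := by
  classical
  have hfin : Finite {I : Ideal R // I.IsMaximal} :=
    (IsArtinianRing.setOfPred_isMaximal_finite R).to_subtype
  letI : ∀ I : {I : Ideal R // I.IsMaximal}, Field (R ⧸ I.1) :=
    fun I => @Ideal.Quotient.field _ _ I.1 I.2
  -- target residues
  set x : ∀ I : {I : Ideal R // I.IsMaximal}, R ⧸ I.1 := fun I =>
    if Ideal.Quotient.mk I.1 b = 0 then 0
    else (1 - Ideal.Quotient.mk I.1 a) * (Ideal.Quotient.mk I.1 b)⁻¹ with hx
  have hcop : Pairwise fun I J : {I : Ideal R // I.IsMaximal} =>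
      IsCoprime (I.1 : Ideal R) J.1 := by
    intro I J hIJ
    exact Ideal.isCoprime_iff_sup_eq.mpr <|
      I.2.coprime_of_ne J.2 (fun e => hIJ (Subtype.ext e))
  obtain ⟨s, hs⟩ := Ideal.pi_quotient_surjective hcop x
  refine ⟨s, ?_⟩
  by_contra hu
  obtain ⟨I, hI, hmem⟩ := exists_max_ideal_of_mem_nonunits hu
  have key : Ideal.Quotient.mk I (a + s * b) ≠ 0 := by
    have hsI := hs ⟨I, hI⟩
    simp only [hx] at hsI
    by_cases hb : Ideal.Quotient.mk (⟨I, hI⟩ : {I : Ideal R // I.IsMaximal}).1 b = 0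
    · have ha : Ideal.Quotient.mk I a ≠ 0 := by
        intro ha0
        have : Ideal.span {a, b} ≤ I := by
          rw [Ideal.span_le]
          rintro x (rfl | rfl)
          · exact Ideal.Quotient.eq_zero_iff_mem.mp ha0
          · simpa using Ideal.Quotient.eq_zero_iff_mem.mp hb
        rw [h] at this
        exact hI.ne_top (top_le_iff.mp this)
      simpa [hb] using ha
    · rw [map_add, map_mul, hsI, if_neg hb, mul_assoc,
        inv_mul_cancel₀ hb, mul_one]
      simp
  exact key (Ideal.Quotient.eq_zero_iff_mem.mpr hmem)
end
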